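/- Let H and G be metric spaces in which any two distinct points are at distance ≥ 1 and all balls are finite, and let f : H → G be a map. Let ρ₋ : [0,∞) → [0,∞) be a non-decreasing function with ρ₋(d(x,y)) ≤ d(f(x),f(y)) for all x,y ∈ H. Assume: (i) there are constants C ≥ 1 and p ≥ 1 such that #B_H(x,r) ≤ C·r^p for every x ∈ H and every r ≥ 1; and (ii) there are an integer n ≥ 2, a constant α > 0 and a radius r₁ ≥ 1 such that for every r ≥ r₁ there exists h_r ∈ H with #(B_G(f(h_r), r) ∩ f(H)) ≥ α·r^{n−1}. Then there exists a constant C' > 0 such that ρ₋(r) ≤ C'·r^{p/(n−1)} + C' for all r ≥ 0. -/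
import Mathlib


open Metric Set

lemma distortion_key
    {H G : Type*} [MetricSpace H] [MetricSpace G]
    (hHfin : ∀ (x : H) (r : ℝ), (Metric.closedBall x r).Finite)
    (hGfin : ∀ (x : G) (r : ℝ), (Metric.closedBall x r).Finite)
    (f : H → G) (ρm : ℝ → ℝ) (hρmono : Monotone ρm)
    (hρ : ∀ x y : H, ρm (dist x y) ≤ dist (f x) (f y))
    (C p : ℝ) (hC : 1 ≤ C) (hp : 1 ≤ p)
    (hgrowth : ∀ (x : H) (r : ℝ), 1 ≤ r → ((Metric.closedBall x r).ncard : ℝ) ≤ C * r ^ p)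
    (n : ℕ) (α : ℝ) (hα : 0 < α)
    (r : ℝ) (hr : 1 ≤ r) (h : H)
    (hh : α * r ^ ((n : ℝ) - 1) ≤ ((Metric.closedBall (f h) r ∩ Set.range f).ncard : ℝ)) :
    ρm ((α * r ^ ((n : ℝ) - 1) / C) ^ (1/p)) ≤ 2 * r + max (ρm 1) 0 := by
  classical
  have hC0 : (0:ℝ) < C := lt_of_lt_of_le one_pos hC
  have hp0 : (0:ℝ) < p := lt_of_lt_of_le one_pos hp
  have hr0 : (0:ℝ) < r := lt_of_lt_of_le one_pos hr
  set T := Metric.closedBall (f h) r ∩ Set.range f with hT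
  have hTfin : T.Finite := (hGfin (f h) r).subset Set.inter_subset_left
  have hXpos : 0 < α * r ^ ((n : ℝ) - 1) :=
    mul_pos hα (Real.rpow_pos_of_pos hr0 _)
  -- choose preimages
  set g : G → H := fun y => if hy : ∃ x, f x = y then hy.choose else h with hg
  have hgf : ∀ y ∈ T, f (g y) = y := by
    intro y hy
    have hy2 : ∃ x, f x = y := hy.2
    simp only [hg, dif_pos hy2]
    exact hy2.choose_spec
  set S := g '' T with hS
  have hSfin : S.Finite := hTfin.image g
  have hinj : Set.InjOn g T := by
    intro a ha b hb hab
    rw [← hgf a ha, ← hgf b hb, hab]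
  have hScard : S.ncard = T.ncard := Set.ncard_image_of_injOn hinj
  have hTne : T.Nonempty := by
    rcases T.eq_empty_or_nonempty with he | hne
    · exfalso
      rw [he] at hh
      simp at hh
      linarith
    · exact hne
  have hSne : S.Nonempty := hTne.image g
  have hSfinset : hSfin.toFinset.Nonempty := by
    simpa using hSne
  obtain ⟨x₀, hx₀⟩ := hSne
  -- maximal distance point
  obtain ⟨y, hyF, hymax⟩ :=
    hSfin.toFinset.exists_max_image (fun z => dist x₀ z) hSfinset
  have hyS : y ∈ S := hSfin.mem_toFinset.mp hyF
  set R := dist x₀ y with hRdef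
  have hsub : S ⊆ Metric.closedBall x₀ (max R 1) := by
    intro z hz
    have := hymax z (hSfin.mem_toFinset.mpr hz)
    rw [Metric.mem_closedBall, dist_comm]
    exact le_trans this (le_max_left _ _)
  have hcard_le : (S.ncard : ℝ) ≤ C * (max R 1) ^ p := by
    have h1 : S.ncard ≤ (Metric.closedBall x₀ (max R 1)).ncard :=
      Set.ncard_le_ncard hsub (hHfin _ _)
    calc (S.ncard : ℝ) ≤ ((Metric.closedBall x₀ (max R 1)).ncard : ℝ) := by exact_mod_cast h1
      _ ≤ C * (max R 1) ^ p := hgrowth x₀ _ (le_max_right _ _)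
  have hkey : α * r ^ ((n : ℝ) - 1) / C ≤ (max R 1) ^ p := by
    rw [div_le_iff₀ hC0]
    calc α * r ^ ((n : ℝ) - 1) ≤ (T.ncard : ℝ) := hh
      _ = (S.ncard : ℝ) := by rw [hScard]
      _ ≤ C * (max R 1) ^ p := hcard_le
      _ = (max R 1) ^ p * C := mul_comm _ _
  set A := (α * r ^ ((n : ℝ) - 1) / C) ^ (1/p) with hA
  have hmax1 : (0:ℝ) ≤ max R 1 := le_trans zero_le_one (le_max_right _ _)
  have hAle : A ≤ max R 1 := by
    have h1 : A ≤ ((max R 1) ^ p) ^ (1/p) :=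
      Real.rpow_le_rpow (le_of_lt (div_pos hXpos hC0)) hkey (by positivity)
    have h2 : ((max R 1) ^ p) ^ (1/p) = max R 1 := by
      rw [← Real.rpow_mul hmax1, mul_one_div, div_self (ne_of_gt hp0), Real.rpow_one]
    rwa [h2] at h1
  rcases le_or_gt A 1 with hA1 | hA1
  · have : ρm A ≤ ρm 1 := hρmono hA1
    have h2r : (0:ℝ) ≤ 2 * r := by linarith
    calc ρm A ≤ ρm 1 := this
      _ ≤ max (ρm 1) 0 := le_max_left _ _
      _ ≤ 2 * r + max (ρm 1) 0 := by linarith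
  · -- A > 1, so max R 1 = R and A ≤ R
    have hAR : A ≤ R := by
      rcases le_or_gt R 1 with hR1 | hR1
      · have : max R 1 = 1 := max_eq_right hR1
        rw [this] at hAle; linarith
      · rwa [max_eq_left (le_of_lt hR1)] at hAle
    have hmono : ρm A ≤ ρm R := hρmono hAR
    have hdist : dist (f x₀) (f y) ≤ 2 * r := by
      obtain ⟨t₀, ht₀T, ht₀⟩ := hx₀
      obtain ⟨ty, htyT, hty⟩ := hyS
      have hfx₀ : f x₀ ∈ Metric.closedBall (f h) r := by
        rw [← ht₀, hgf t₀ ht₀T]; exact ht₀T.1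
      have hfy : f y ∈ Metric.closedBall (f h) r := by
        rw [← hty, hgf ty htyT]; exact htyT.1
      calc dist (f x₀) (f y) ≤ dist (f x₀) (f h) + dist (f h) (f y) := dist_triangle _ _ _
        _ ≤ r + r := add_le_add (Metric.mem_closedBall.mp hfx₀)
            (by rw [dist_comm]; exact Metric.mem_closedBall.mp hfy)
        _ = 2 * r := by ring
    have : ρm R ≤ 2 * r := le_trans (hρ x₀ y) hdist
    have hM : (0:ℝ) ≤ max (ρm 1) 0 := le_max_right _ _
    linarith

/-- Quantitative distortion bound: if `f : H → G` has lower control function `ρ₋`, the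
source `H` has polynomial growth of degree `p`, and the image of `f` meets balls of radius
`r` in at least `α·r^{n−1}` points for all large `r`, then `ρ₋(r) ≤ C'·r^{p/(n−1)} + C'`. -/
theorem distortion_upper_bound
    {H G : Type*} [MetricSpace H] [MetricSpace G]
    (hH1 : ∀ x y : H, x ≠ y → 1 ≤ dist x y)
    (hHfin : ∀ (x : H) (r : ℝ), (Metric.closedBall x r).Finite)
    (hG1 : ∀ x y : G, x ≠ y → 1 ≤ dist x y)
    (hGfin : ∀ (x : G) (r : ℝ), (Metric.closedBall x r).Finite)
    (f : H → G) (ρm : ℝ → ℝ) (hρmono : Monotone ρm)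
    (hρ : ∀ x y : H, ρm (dist x y) ≤ dist (f x) (f y))
    (C p : ℝ) (hC : 1 ≤ C) (hp : 1 ≤ p)
    (hgrowth : ∀ (x : H) (r : ℝ), 1 ≤ r → ((Metric.closedBall x r).ncard : ℝ) ≤ C * r ^ p)
    (n : ℕ) (hn : 2 ≤ n) (α : ℝ) (hα : 0 < α) (r₁ : ℝ) (hr₁ : 1 ≤ r₁)
    (himg : ∀ r : ℝ, r₁ ≤ r → ∃ h : H,
      α * r ^ ((n : ℝ) - 1) ≤ ((Metric.closedBall (f h) r ∩ Set.range f).ncard : ℝ)) :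
    ∃ C' > (0 : ℝ), ∀ r : ℝ, 0 ≤ r → ρm r ≤ C' * r ^ (p / ((n : ℝ) - 1)) + C' := by
  have hn1 : (0:ℝ) < (n : ℝ) - 1 := by
    have : (2:ℝ) ≤ (n:ℝ) := by exact_mod_cast hn
    linarith
  have hC0 : (0:ℝ) < C := lt_of_lt_of_le one_pos hC
  have hp0 : (0:ℝ) < p := lt_of_lt_of_le one_pos hp
  set M := max (ρm 1) 0 with hM
  set K := (C / α) ^ (1 / ((n:ℝ) - 1)) with hK
  have hK0 : (0:ℝ) ≤ K := Real.rpow_nonneg (le_of_lt (div_pos hC0 hα)) _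
  refine ⟨2 * r₁ + M + 2 * K, by positivity, ?_⟩
  intro s hs
  set r := max r₁ ((C * s ^ p / α) ^ (1 / ((n:ℝ) - 1))) with hrdef
  have hrr₁ : r₁ ≤ r := le_max_left _ _
  have hr1 : 1 ≤ r := le_trans hr₁ hrr₁
  obtain ⟨h, hh⟩ := himg r hrr₁
  have hkey := distortion_key hHfin hGfin f ρm hρmono hρ C p hC hp hgrowth n α hα r hr1 h hh
  -- s ≤ A
  have hsA : s ≤ (α * r ^ ((n : ℝ) - 1) / C) ^ (1/p) := by
    have hr0 : (0:ℝ) < r := lt_of_lt_of_le one_pos hr1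
    have hstep : C * s ^ p / α ≤ r ^ ((n:ℝ) - 1) := by
      have h1 : (C * s ^ p / α) ^ (1 / ((n:ℝ) - 1)) ≤ r := le_max_right _ _
      have hbase : (0:ℝ) ≤ C * s ^ p / α := by positivity
      calc C * s ^ p / α
          = ((C * s ^ p / α) ^ (1 / ((n:ℝ) - 1))) ^ ((n:ℝ) - 1) := by
            rw [← Real.rpow_mul hbase, one_div_mul_cancel (ne_of_gt hn1), Real.rpow_one]
        _ ≤ r ^ ((n:ℝ) - 1) := Real.rpow_le_rpow (Real.rpow_nonneg hbase _) h1 (le_of_lt hn1)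
    have hsp : s ^ p ≤ α * r ^ ((n:ℝ) - 1) / C := by
      rw [le_div_iff₀ hC0]
      rw [div_le_iff₀ hα] at hstep
      linarith [hstep]
    calc s = (s ^ p) ^ (1/p) := by
          rw [← Real.rpow_mul hs, mul_one_div, div_self (ne_of_gt hp0), Real.rpow_one]
      _ ≤ (α * r ^ ((n:ℝ) - 1) / C) ^ (1/p) :=
          Real.rpow_le_rpow (Real.rpow_nonneg hs _) hsp (by positivity)
  have h1 : ρm s ≤ 2 * r + M := le_trans (hρmono hsA) hkey
  -- bound r
  have hrbound : r ≤ r₁ + K * s ^ (p / ((n:ℝ) - 1)) := by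
    have heq : (C * s ^ p / α) ^ (1 / ((n:ℝ) - 1)) = K * s ^ (p / ((n:ℝ) - 1)) := by
      rw [hK]
      rw [show C * s ^ p / α = (C / α) * s ^ p by ring]
      rw [Real.mul_rpow (le_of_lt (div_pos hC0 hα)) (Real.rpow_nonneg hs _),
        ← Real.rpow_mul hs, mul_one_div]
    have : (C * s ^ p / α) ^ (1 / ((n:ℝ) - 1)) ≤ K * s ^ (p / ((n:ℝ) - 1)) := le_of_eq heq
    have hk0 : (0:ℝ) ≤ K * s ^ (p / ((n:ℝ) - 1)) := by positivity
    rcases max_cases r₁ ((C * s ^ p / α) ^ (1 / ((n:ℝ) - 1))) with ⟨he, _⟩ | ⟨he, _⟩ <;>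
      rw [hrdef, he] <;> linarith
  have hspow : (0:ℝ) ≤ s ^ (p / ((n:ℝ) - 1)) := Real.rpow_nonneg hs _
  calc ρm s ≤ 2 * r + M := h1
    _ ≤ 2 * (r₁ + K * s ^ (p / ((n:ℝ) - 1))) + M := by linarith
    _ ≤ (2 * r₁ + M + 2 * K) * s ^ (p / ((n:ℝ) - 1)) + (2 * r₁ + M + 2 * K) := by
        have hM0 : (0:ℝ) ≤ M := le_max_right _ _
        nlinarith [mul_nonneg hK0 hspow]
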